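/- (Mean-zero property of the efficient influence function.) In the capture-recapture setup, assume MAR and positivity, and define 1/γ(v,x) = 1 + Π_{y ≠ 0} q_y(v,x)^{(−1)^{|y|+1}} and assume E_Q[1/γ(V,X)] = 1/ψ (which holds under the NHOI conditional log-linear model). Let m(v) = E_Q[ 1/γ(V,X) − 1 | V=v ] and define, for an observation z = (y,v,x,r) with y ≠ 0, φ(z) = Σ_{y' ≠ 0} (−1)^{1+|y'|} { (r·1(y=y') / π(y',v)) · [ (1/q_{y'}(v,x))(1/γ(v,x) − 1) − (1/q_{y'}(v)) m(v) ] + (1(y=y')/q_{y'}(v)) m(v) } − (1/ψ − 1). Then E_Q[ φ(Y,V,X,R) ] = 0. -/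

import Mathlib

open scoped Classical
open Finset

/-- Probability `P(A)` of an event `A` under a probability weight `w` on a finite
outcome space `Ω`. -/
noncomputable def pr {Ω : Type*} [Fintype Ω] (w : Ω → ℝ) (A : Ω → Prop) : ℝ :=
  ∑ ω, if A ω then w ω else 0

/-- Conditional probability `P(A | B)` under the weight `w`. -/
noncomputable def cpr {Ω : Type*} [Fintype Ω] (w : Ω → ℝ) (A B : Ω → Prop) : ℝ :=
  pr w (fun ω => A ω ∧ B ω) / pr w B

/-- Conditional expectation `E[f | B]` under the weight `w`. -/
noncomputable def cexp {Ω : Type*} [Fintype Ω] (w : Ω → ℝ) (f : Ω → ℝ) (B : Ω → Prop) : ℝ :=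
  (∑ ω, if B ω then w ω * f ω else 0) / pr w B

/-- Full conditional q-probability `q_y(v,x) = Q(Y = y | V = v, X = x)`, where `Q` is the
law of the data conditional on capture (`Y ≠ 0`). -/
noncomputable def qfull {Ω 𝒱 𝒳 : Type*} [Fintype Ω] {K : ℕ}
    (w : Ω → ℝ) (Y : Ω → Finset (Fin K)) (V : Ω → 𝒱) (X : Ω → 𝒳)
    (y : Finset (Fin K)) (v : 𝒱) (x : 𝒳) : ℝ :=
  cpr w (fun ω => Y ω = y) (fun ω => V ω = v ∧ X ω = x ∧ Y ω ≠ ∅)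

/-- `V`-only conditional q-probability `q_y(v) = Q(Y = y | V = v)`. -/
noncomputable def qV {Ω 𝒱 : Type*} [Fintype Ω] {K : ℕ}
    (w : Ω → ℝ) (Y : Ω → Finset (Fin K)) (V : Ω → 𝒱)
    (y : Finset (Fin K)) (v : 𝒱) : ℝ :=
  cpr w (fun ω => Y ω = y) (fun ω => V ω = v ∧ Y ω ≠ ∅)

/-- Covariate distribution among the fully observed,
`λ_x(y,v) = Q(X = x | Y = y, V = v, R = 1)`. -/
noncomputable def lam {Ω 𝒱 𝒳 : Type*} [Fintype Ω] {K : ℕ}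
    (w : Ω → ℝ) (Y : Ω → Finset (Fin K)) (V : Ω → 𝒱) (X : Ω → 𝒳) (R : Ω → Bool)
    (x : 𝒳) (y : Finset (Fin K)) (v : 𝒱) : ℝ :=
  cpr w (fun ω => X ω = x) (fun ω => Y ω = y ∧ V ω = v ∧ R ω = true ∧ Y ω ≠ ∅)

/-- Missingness propensity score `π(y,v) = Q(R = 1 | Y = y, V = v)`. -/
noncomputable def piR {Ω 𝒱 : Type*} [Fintype Ω] {K : ℕ}
    (w : Ω → ℝ) (Y : Ω → Finset (Fin K)) (V : Ω → 𝒱) (R : Ω → Bool)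
    (y : Finset (Fin K)) (v : 𝒱) : ℝ :=
  cpr w (fun ω => R ω = true) (fun ω => Y ω = y ∧ V ω = v ∧ Y ω ≠ ∅)

lemma pr_congr {Ω : Type*} [Fintype Ω] (w : Ω → ℝ) {A B : Ω → Prop}
    (h : ∀ ω, A ω ↔ B ω) : pr w A = pr w B := by
  unfold pr; exact Finset.sum_congr rfl fun ω _ => by simp [h ω]

lemma pr_nonneg {Ω : Type*} [Fintype Ω] {w : Ω → ℝ} (hw : ∀ ω, 0 ≤ w ω) (A : Ω → Prop) :
    0 ≤ pr w A :=
  Finset.sum_nonneg fun ω _ => by by_cases hA : A ω <;> simp [hA, hw ω]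

lemma pr_mono {Ω : Type*} [Fintype Ω] {w : Ω → ℝ} (hw : ∀ ω, 0 ≤ w ω) {A B : Ω → Prop}
    (h : ∀ ω, A ω → B ω) : pr w A ≤ pr w B := by
  unfold pr
  apply Finset.sum_le_sum
  intro ω _
  by_cases hA : A ω
  · simp [hA, h ω hA]
  · by_cases hB : B ω <;> simp [hA, hB, hw ω]

lemma crSignSum (K : ℕ) (hK : 1 ≤ K) :
    ∑ y ∈ Finset.univ.filter (fun y : Finset (Fin K) => y ≠ ∅), (-1 : ℝ) ^ (1 + y.card) = 1 := by
  have h0 : ∑ y : Finset (Fin K), (-1 : ℝ) ^ y.card = 0 := by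
    haveI : Nonempty (Fin K) := ⟨⟨0, hK⟩⟩
    have := Finset.sum_powerset_neg_one_pow_card_of_nonempty
      (x := (Finset.univ : Finset (Fin K)))
      (Finset.univ_nonempty (α := Fin K))
    have h2 : ∑ y : Finset (Fin K), (-1 : ℝ) ^ y.card
        = ((∑ m ∈ (Finset.univ : Finset (Fin K)).powerset, (-1 : ℤ) ^ m.card : ℤ) : ℝ) := by
      push_cast
      rw [Finset.powerset_univ]
    rw [h2, this]; simp
  have hsplit : (Finset.univ : Finset (Finset (Fin K)))
      = insert ∅ (Finset.univ.filter (fun y : Finset (Fin K) => y ≠ ∅)) := by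
    ext y; simp [eq_comm]; tauto
  have h1 : ∑ y : Finset (Fin K), (-1 : ℝ) ^ (1 + y.card)
      = (-1) + ∑ y ∈ Finset.univ.filter (fun y : Finset (Fin K) => y ≠ ∅), (-1 : ℝ) ^ (1 + y.card) := by
    conv_lhs => rw [hsplit]
    rw [Finset.sum_insert (by simp)]
    simp
  have h3 : ∑ y : Finset (Fin K), (-1 : ℝ) ^ (1 + y.card) = 0 := by
    simp_rw [pow_add, pow_one]
    rw [← Finset.mul_sum, h0, mul_zero]
  linarith [h1, h3]

/-- Key per-`y'` identity: the IPW + augmentation terms integrate to `E_Q[(γ⁻¹ - 1)·1{Y≠∅}]`. -/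
lemma key_term {Ω 𝒱 𝒳 : Type*} [Fintype Ω] {K : ℕ}
    (w : Ω → ℝ) (Y : Ω → Finset (Fin K)) (V : Ω → 𝒱) (X : Ω → 𝒳) (R : Ω → Bool)
    (hw0 : ∀ ω, 0 ≤ w ω)
    (hMAR : ∀ (y : Finset (Fin K)) (v : 𝒱) (x : 𝒳) (r : Bool),
      0 < pr w (fun ω => Y ω = y ∧ V ω = v ∧ Y ω ≠ ∅) →
      cpr w (fun ω => X ω = x ∧ R ω = r) (fun ω => Y ω = y ∧ V ω = v ∧ Y ω ≠ ∅)
        = cpr w (fun ω => X ω = x) (fun ω => Y ω = y ∧ V ω = v ∧ Y ω ≠ ∅)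
          * cpr w (fun ω => R ω = r) (fun ω => Y ω = y ∧ V ω = v ∧ Y ω ≠ ∅))
    (hpos : ∀ y : Finset (Fin K), y ≠ ∅ → ∀ (v : 𝒱) (x : 𝒳),
      0 < pr w (fun ω => V ω = v ∧ X ω = x ∧ Y ω ≠ ∅) →
      0 < qfull w Y V X y v x ∧ 0 < qV w Y V y v ∧ 0 < piR w Y V R y v)
    (gi : 𝒱 → 𝒳 → ℝ) (m : 𝒱 → ℝ)
    (y' : Finset (Fin K)) (hy' : y' ≠ ∅) :
    ∑ ω, (if Y ω ≠ ∅ then w ω *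
        (((if R ω = true then (1 : ℝ) else 0) * (if Y ω = y' then (1 : ℝ) else 0))
            / piR w Y V R y' (V ω) *
          ((1 / qfull w Y V X y' (V ω) (X ω)) * (gi (V ω) (X ω) - 1)
            - (1 / qV w Y V y' (V ω)) * m (V ω))
        + (if Y ω = y' then (1 : ℝ) else 0) / qV w Y V y' (V ω) * m (V ω)) else 0)
      = ∑ ω, (if Y ω ≠ ∅ then w ω * (gi (V ω) (X ω) - 1) else 0) := by
  classical
  have hmap : ∀ ω ∈ (Finset.univ : Finset Ω),
      (V ω, X ω) ∈ Finset.univ.image (fun ω => (V ω, X ω)) :=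
    fun ω _ => Finset.mem_image_of_mem _ (Finset.mem_univ ω)
  rw [← Finset.sum_fiberwise_of_maps_to hmap, ← Finset.sum_fiberwise_of_maps_to hmap]
  refine Finset.sum_congr rfl fun p _ => ?_
  obtain ⟨v, x⟩ := p
  simp_rw [Finset.sum_filter]
  have hL : (∑ ω, if (V ω, X ω) = (v, x) then
        (if Y ω ≠ ∅ then w ω *
          (((if R ω = true then (1 : ℝ) else 0) * (if Y ω = y' then (1 : ℝ) else 0))
              / piR w Y V R y' (V ω) *
            ((1 / qfull w Y V X y' (V ω) (X ω)) * (gi (V ω) (X ω) - 1)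
              - (1 / qV w Y V y' (V ω)) * m (V ω))
          + (if Y ω = y' then (1 : ℝ) else 0) / qV w Y V y' (V ω) * m (V ω)) else 0) else 0)
      = (1 / piR w Y V R y' v *
          ((1 / qfull w Y V X y' v x) * (gi v x - 1) - (1 / qV w Y V y' v) * m v))
          * pr w (fun ω => V ω = v ∧ X ω = x ∧ Y ω = y' ∧ R ω = true)
        + (m v / qV w Y V y' v) * pr w (fun ω => V ω = v ∧ X ω = x ∧ Y ω = y') := by
    unfold pr
    rw [Finset.mul_sum, Finset.mul_sum, ← Finset.sum_add_distrib]
    refine Finset.sum_congr rfl fun ω _ => ?_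
    by_cases hv : V ω = v
    · by_cases hx : X ω = x
      · by_cases hy : Y ω = y'
        · have hne : Y ω ≠ ∅ := by rw [hy]; exact hy'
          cases hr : R ω
          · simp only [Prod.mk.injEq, hv, hx, hy, hr, hy', and_self, and_true, true_and,
              if_true, ne_eq, not_false_iff, Bool.false_eq_true, if_false, and_false]
            ring
          · simp only [Prod.mk.injEq, hv, hx, hy, hr, hy', and_self, and_true, true_and,
              if_true, ne_eq, not_false_iff, if_false]
            ring
        · by_cases hne : Y ω = ∅
          · simp [Prod.mk.injEq, hv, hx, hy, hne, Ne.symm hy']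
          · simp [Prod.mk.injEq, hv, hx, hy, hne]
      · simp [Prod.mk.injEq, hx]
    · simp [Prod.mk.injEq, hv]
  have hR : (∑ ω, if (V ω, X ω) = (v, x) then
        (if Y ω ≠ ∅ then w ω * (gi (V ω) (X ω) - 1) else 0) else 0)
      = (gi v x - 1) * pr w (fun ω => V ω = v ∧ X ω = x ∧ Y ω ≠ ∅) := by
    unfold pr
    rw [Finset.mul_sum]
    refine Finset.sum_congr rfl fun ω _ => ?_
    by_cases hv : V ω = v
    · by_cases hx : X ω = x
      · by_cases hne : Y ω = ∅
        · simp [Prod.mk.injEq, hv, hx, hne]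
        · simp only [Prod.mk.injEq, hv, hx, hne, and_self, if_true, ne_eq, not_false_iff]
          ring
      · simp [Prod.mk.injEq, hx]
    · simp [Prod.mk.injEq, hv]
  rw [hL, hR]
  have hPnn : 0 ≤ pr w (fun ω => V ω = v ∧ X ω = x ∧ Y ω ≠ ∅) := pr_nonneg hw0 _
  rcases eq_or_lt_of_le hPnn with hP0 | hPpos
  · have hTY0 : pr w (fun ω => V ω = v ∧ X ω = x ∧ Y ω = y') = 0 := by
      have hle := pr_mono hw0 (B := fun ω => V ω = v ∧ X ω = x ∧ Y ω ≠ ∅)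
        (fun ω (h : V ω = v ∧ X ω = x ∧ Y ω = y') => ⟨h.1, h.2.1, h.2.2 ▸ hy'⟩)
      have hnn := pr_nonneg hw0 (fun ω => V ω = v ∧ X ω = x ∧ Y ω = y')
      linarith
    have hTR0 : pr w (fun ω => V ω = v ∧ X ω = x ∧ Y ω = y' ∧ R ω = true) = 0 := by
      have hle := pr_mono hw0 (B := fun ω => V ω = v ∧ X ω = x ∧ Y ω ≠ ∅)
        (fun ω (h : V ω = v ∧ X ω = x ∧ Y ω = y' ∧ R ω = true) =>
          ⟨h.1, h.2.1, h.2.2.1 ▸ hy'⟩)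
      have hnn := pr_nonneg hw0 (fun ω => V ω = v ∧ X ω = x ∧ Y ω = y' ∧ R ω = true)
      linarith
    rw [hTY0, hTR0, ← hP0]; ring
  · obtain ⟨hqf, hqv, hπ⟩ := hpos y' hy' v x hPpos
    have hTY : pr w (fun ω => V ω = v ∧ X ω = x ∧ Y ω = y')
        = qfull w Y V X y' v x * pr w (fun ω => V ω = v ∧ X ω = x ∧ Y ω ≠ ∅) := by
      have hq : qfull w Y V X y' v x
          = pr w (fun ω => V ω = v ∧ X ω = x ∧ Y ω = y')
            / pr w (fun ω => V ω = v ∧ X ω = x ∧ Y ω ≠ ∅) := by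
        unfold qfull cpr
        congr 1
        refine pr_congr w fun ω => ?_
        constructor
        · rintro ⟨h1, h2, h3, _⟩; exact ⟨h2, h3, h1⟩
        · rintro ⟨h1, h2, h3⟩; exact ⟨h3, h1, h2, h3 ▸ hy'⟩
      rw [hq, div_mul_cancel₀ _ (ne_of_gt hPpos)]
    have hTYpos : 0 < pr w (fun ω => V ω = v ∧ X ω = x ∧ Y ω = y') := by
      rw [hTY]; positivity
    have hNpos : 0 < pr w (fun ω => Y ω = y' ∧ V ω = v ∧ Y ω ≠ ∅) := by
      have hle := pr_mono hw0 (B := fun ω => Y ω = y' ∧ V ω = v ∧ Y ω ≠ ∅)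
        (fun ω (h : V ω = v ∧ X ω = x ∧ Y ω = y') => ⟨h.2.2, h.1, h.2.2 ▸ hy'⟩)
      linarith
    have hTR : pr w (fun ω => V ω = v ∧ X ω = x ∧ Y ω = y' ∧ R ω = true)
        = piR w Y V R y' v * pr w (fun ω => V ω = v ∧ X ω = x ∧ Y ω = y') := by
      have hmar := hMAR y' v x true hNpos
      have hpiRe : piR w Y V R y' v
          = cpr w (fun ω => R ω = true) (fun ω => Y ω = y' ∧ V ω = v ∧ Y ω ≠ ∅) := rfl
      rw [← hpiRe] at hmar
      unfold cpr at hmar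
      beta_reduce at hmar
      have e1 : pr w (fun ω => (X ω = x ∧ R ω = true) ∧ Y ω = y' ∧ V ω = v ∧ Y ω ≠ ∅)
          = pr w (fun ω => V ω = v ∧ X ω = x ∧ Y ω = y' ∧ R ω = true) := by
        refine pr_congr w fun ω => ?_
        constructor
        · rintro ⟨⟨h1, h2⟩, h3, h4, _⟩; exact ⟨h4, h1, h3, h2⟩
        · rintro ⟨h1, h2, h3, h4⟩; exact ⟨⟨h2, h4⟩, h3, h1, h3 ▸ hy'⟩
      have e2 : pr w (fun ω => X ω = x ∧ Y ω = y' ∧ V ω = v ∧ Y ω ≠ ∅)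
          = pr w (fun ω => V ω = v ∧ X ω = x ∧ Y ω = y') := by
        refine pr_congr w fun ω => ?_
        constructor
        · rintro ⟨h1, h2, h3, _⟩; exact ⟨h3, h1, h2⟩
        · rintro ⟨h1, h2, h3⟩; exact ⟨h2, h3, h1, h3 ▸ hy'⟩
      rw [e1, e2] at hmar
      have hNne : pr w (fun ω => Y ω = y' ∧ V ω = v ∧ Y ω ≠ ∅) ≠ 0 := ne_of_gt hNpos
      field_simp at hmar
      linarith [hmar]
    rw [hTR, hTY]
    field_simp
    ring

/-- **Mean-zero property of the efficient influence function.** In the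
capture-recapture setup, assume MAR and positivity, define
`1/γ(v,x) = 1 + Π_{y ≠ 0} q_y(v,x)^{(−1)^{|y|+1}}` (denoted `gi v x` below), assume
`E_Q[1/γ(V,X)] = 1/ψ` (which holds under the NHOI conditional log-linear model), and let
`m(v) = E_Q[ 1/γ(V,X) − 1 | V=v ]`.  With the efficient influence function `φ` defined
as in the paper, `E_Q[ φ(Y,V,X,R) ] = 0`. -/
theorem eif_mean_zero
    {Ω 𝒱 𝒳 : Type*} [Fintype Ω] {K : ℕ} (hK : 1 ≤ K)
    (w : Ω → ℝ) (Y : Ω → Finset (Fin K)) (V : Ω → 𝒱) (X : Ω → 𝒳) (R : Ω → Bool)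
    (hw0 : ∀ ω, 0 ≤ w ω) (hw1 : ∑ ω, w ω = 1)
    (hψ : 0 < pr w (fun ω => Y ω ≠ ∅))
    -- MAR: X and R are conditionally independent given (V, Y) under Q
    (hMAR : ∀ (y : Finset (Fin K)) (v : 𝒱) (x : 𝒳) (r : Bool),
      0 < pr w (fun ω => Y ω = y ∧ V ω = v ∧ Y ω ≠ ∅) →
      cpr w (fun ω => X ω = x ∧ R ω = r) (fun ω => Y ω = y ∧ V ω = v ∧ Y ω ≠ ∅)
        = cpr w (fun ω => X ω = x) (fun ω => Y ω = y ∧ V ω = v ∧ Y ω ≠ ∅)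
          * cpr w (fun ω => R ω = r) (fun ω => Y ω = y ∧ V ω = v ∧ Y ω ≠ ∅))
    -- positivity: q_y(v,x), q_y(v), π(y,v) > 0 on the support
    (hpos : ∀ y : Finset (Fin K), y ≠ ∅ → ∀ (v : 𝒱) (x : 𝒳),
      0 < pr w (fun ω => V ω = v ∧ X ω = x ∧ Y ω ≠ ∅) →
      0 < qfull w Y V X y v x ∧ 0 < qV w Y V y v ∧ 0 < piR w Y V R y v)
    -- gi v x = 1/γ(v,x) = 1 + Π_{y ≠ 0} q_y(v,x)^{(−1)^{|y|+1}}
    (gi : 𝒱 → 𝒳 → ℝ)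
    (hgi : ∀ (v : 𝒱) (x : 𝒳), gi v x
      = 1 + ∏ y ∈ Finset.univ.filter (fun y : Finset (Fin K) => y ≠ ∅),
          qfull w Y V X y v x ^ ((-1 : ℤ) ^ (y.card + 1)))
    -- E_Q[1/γ(V,X)] = 1/ψ
    (hid : cexp w (fun ω => gi (V ω) (X ω)) (fun ω => Y ω ≠ ∅)
      = 1 / pr w (fun ω => Y ω ≠ ∅))
    -- m(v) = E_Q[1/γ(V,X) − 1 | V = v]
    (m : 𝒱 → ℝ)
    (hm : ∀ v : 𝒱, m v
      = cexp w (fun ω => gi (V ω) (X ω) - 1) (fun ω => V ω = v ∧ Y ω ≠ ∅))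
    -- the efficient influence function φ(z) for z = (y,v,x,r) with y ≠ 0
    (φ : Finset (Fin K) → 𝒱 → 𝒳 → Bool → ℝ)
    (hφ : ∀ (y : Finset (Fin K)) (v : 𝒱) (x : 𝒳) (r : Bool), φ y v x r
      = (∑ y' ∈ Finset.univ.filter (fun y' : Finset (Fin K) => y' ≠ ∅),
          (-1 : ℝ) ^ (1 + y'.card) *
            (((if r = true then (1 : ℝ) else 0) * (if y = y' then (1 : ℝ) else 0))
                / piR w Y V R y' v *
              ((1 / qfull w Y V X y' v x) * (gi v x - 1)
                - (1 / qV w Y V y' v) * m v)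
            + (if y = y' then (1 : ℝ) else 0) / qV w Y V y' v * m v))
        - (1 / pr w (fun ω => Y ω ≠ ∅) - 1)) :
    cexp w (fun ω => φ (Y ω) (V ω) (X ω) (R ω)) (fun ω => Y ω ≠ ∅) = 0 := by
  classical
  have hψne : pr w (fun ω => Y ω ≠ ∅) ≠ 0 := ne_of_gt hψ
  unfold cexp
  rw [div_eq_zero_iff]
  left
  -- abbreviations
  have hnum : ∀ ω, (if Y ω ≠ ∅ then w ω * φ (Y ω) (V ω) (X ω) (R ω) else 0)
      = (∑ y' ∈ Finset.univ.filter (fun y' : Finset (Fin K) => y' ≠ ∅),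
          (-1 : ℝ) ^ (1 + y'.card) *
            (if Y ω ≠ ∅ then w ω *
              (((if R ω = true then (1 : ℝ) else 0) * (if Y ω = y' then (1 : ℝ) else 0))
                  / piR w Y V R y' (V ω) *
                ((1 / qfull w Y V X y' (V ω) (X ω)) * (gi (V ω) (X ω) - 1)
                  - (1 / qV w Y V y' (V ω)) * m (V ω))
              + (if Y ω = y' then (1 : ℝ) else 0) / qV w Y V y' (V ω) * m (V ω)) else 0))
        - (if Y ω ≠ ∅ then w ω * (1 / pr w (fun ω => Y ω ≠ ∅) - 1) else 0) := by
    intro ω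
    by_cases hne : Y ω ≠ ∅
    · simp only [if_pos hne]
      rw [hφ (Y ω) (V ω) (X ω) (R ω), mul_sub, Finset.mul_sum]
      congr 1
      refine Finset.sum_congr rfl fun y' _ => ?_
      ring
    · push_neg at hne
      simp [hne]
  have main : (∑ ω, if Y ω ≠ ∅ then w ω * φ (Y ω) (V ω) (X ω) (R ω) else 0) = 0 := by
    calc (∑ ω, if Y ω ≠ ∅ then w ω * φ (Y ω) (V ω) (X ω) (R ω) else 0)
        = (∑ ω, ∑ y' ∈ Finset.univ.filter (fun y' : Finset (Fin K) => y' ≠ ∅),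
            (-1 : ℝ) ^ (1 + y'.card) *
              (if Y ω ≠ ∅ then w ω *
                (((if R ω = true then (1 : ℝ) else 0) * (if Y ω = y' then (1 : ℝ) else 0))
                    / piR w Y V R y' (V ω) *
                  ((1 / qfull w Y V X y' (V ω) (X ω)) * (gi (V ω) (X ω) - 1)
                    - (1 / qV w Y V y' (V ω)) * m (V ω))
                + (if Y ω = y' then (1 : ℝ) else 0) / qV w Y V y' (V ω) * m (V ω)) else 0))
          - (∑ ω, if Y ω ≠ ∅ then w ω * (1 / pr w (fun ω => Y ω ≠ ∅) - 1) else 0) := by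
          rw [← Finset.sum_sub_distrib]
          exact Finset.sum_congr rfl fun ω _ => hnum ω
      _ = (∑ y' ∈ Finset.univ.filter (fun y' : Finset (Fin K) => y' ≠ ∅),
            (-1 : ℝ) ^ (1 + y'.card) *
              (∑ ω, (if Y ω ≠ ∅ then w ω *
                (((if R ω = true then (1 : ℝ) else 0) * (if Y ω = y' then (1 : ℝ) else 0))
                    / piR w Y V R y' (V ω) *
                  ((1 / qfull w Y V X y' (V ω) (X ω)) * (gi (V ω) (X ω) - 1)
                    - (1 / qV w Y V y' (V ω)) * m (V ω))
                + (if Y ω = y' then (1 : ℝ) else 0) / qV w Y V y' (V ω) * m (V ω)) else 0)))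
          - (∑ ω, if Y ω ≠ ∅ then w ω * (1 / pr w (fun ω => Y ω ≠ ∅) - 1) else 0) := by
          congr 1
          rw [Finset.sum_comm]
          exact Finset.sum_congr rfl fun y' _ => (Finset.mul_sum _ _ _).symm
      _ = (∑ y' ∈ Finset.univ.filter (fun y' : Finset (Fin K) => y' ≠ ∅),
            (-1 : ℝ) ^ (1 + y'.card) *
              (∑ ω, (if Y ω ≠ ∅ then w ω * (gi (V ω) (X ω) - 1) else 0)))
          - (∑ ω, if Y ω ≠ ∅ then w ω * (1 / pr w (fun ω => Y ω ≠ ∅) - 1) else 0) := by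
          congr 1
          refine Finset.sum_congr rfl fun y' hy' => ?_
          rw [key_term w Y V X R hw0 hMAR hpos gi m y' (Finset.mem_filter.mp hy').2]
      _ = 0 := by
          rw [← Finset.sum_mul, crSignSum K hK, one_mul]
          have hS1 : (∑ ω, if Y ω ≠ ∅ then w ω * gi (V ω) (X ω) else 0) = 1 := by
            unfold cexp at hid
            field_simp at hid
            have hc : (∑ ω, if Y ω ≠ ∅ then w ω * gi (V ω) (X ω) else 0)
                = ∑ x, if Y x = ∅ then 0 else w x * gi (V x) (X x) :=
              Finset.sum_congr rfl fun ω _ => by by_cases h : Y ω = ∅ <;> simp [h]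
            exact hid
          have hS2 : (∑ ω, if Y ω ≠ ∅ then w ω else 0) = pr w (fun ω => Y ω ≠ ∅) := by
            unfold pr
            exact Finset.sum_congr rfl fun ω _ => by by_cases h : Y ω = ∅ <;> simp [h]
          have e1 : (∑ ω, if Y ω ≠ ∅ then w ω * (gi (V ω) (X ω) - 1) else 0)
              = (∑ ω, if Y ω ≠ ∅ then w ω * gi (V ω) (X ω) else 0)
                - (∑ ω, if Y ω ≠ ∅ then w ω else 0) := by
            rw [← Finset.sum_sub_distrib]
            refine Finset.sum_congr rfl fun ω _ => ?_
            by_cases hne : Y ω ≠ ∅ <;> simp [hne] <;> ring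
          have e2 : (∑ ω, if Y ω ≠ ∅ then w ω * (1 / pr w (fun ω => Y ω ≠ ∅) - 1) else 0)
              = (∑ ω, if Y ω ≠ ∅ then w ω else 0) * (1 / pr w (fun ω => Y ω ≠ ∅) - 1) := by
            rw [Finset.sum_mul]
            refine Finset.sum_congr rfl fun ω _ => ?_
            by_cases hne : Y ω ≠ ∅ <;> simp [hne]
          rw [e1, e2, hS1, hS2]
          field_simp
          ring

  refine Eq.trans (Finset.sum_congr rfl fun ω _ => ?_) main
  by_cases h : Y ω ≠ ∅ <;> simp [h]
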